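/- For all positive integers n and k with 1 ≤ k and k < n − k, one has Σ_{d=1}^{k} C(n−k, d) < C(n, k), where C(·,·) denotes the binomial coefficient. -/

import Mathlib

/-- For 1 ≤ k and k < n − k, one has Σ_{d=1}^{k} C(n−k, d) < C(n, k). -/
theorem sum_choose_lt_choose (n k : ℕ) (hk : 1 ≤ k) (hkn : k < n - k) :
    ∑ d ∈ Finset.Icc 1 k, (n - k).choose d < n.choose k := by
  set m := n - k with hm
  have hn : n = m + k := by omega
  have vand : n.choose k
      = ∑ d ∈ Finset.range (k+1), m.choose d * k.choose (k - d) := by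
    rw [hn, Nat.add_choose_eq, Finset.Nat.sum_antidiagonal_eq_sum_range_succ_mk]
  rw [vand]
  calc ∑ d ∈ Finset.Icc 1 k, m.choose d
      ≤ ∑ d ∈ Finset.Icc 1 k, m.choose d * k.choose (k - d) := by
        apply Finset.sum_le_sum
        intro d hd
        exact Nat.le_mul_of_pos_right _ (Nat.choose_pos (Nat.sub_le _ _))
    _ < ∑ d ∈ Finset.range (k+1), m.choose d * k.choose (k - d) := by
        refine Finset.sum_lt_sum_of_subset ?_ (i := 0) (by simp)
          (by simp) (by simp) (fun j _ _ => Nat.zero_le _)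
        intro x hx
        simp only [Finset.mem_Icc] at hx
        simp only [Finset.mem_range]; omega
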